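/- Let A be a type, let t : (ℕ → ℕ) → A be a continuous functional, and let s : ℕ → (ℕ → ℕ) be a weakly increasing chain. Then there exists n ∈ ℕ such that t (s m) = t (s n) for all m ≥ n (the Convergence Theorem: continuous functionals stabilize along weakly increasing chains of approximations). -/
import Mathlib


/-- The pointwise information order on approximating functions:
`f ≤ g` iff whenever `f n` is a non-default (nonzero) value, `g` agrees with it. -/
def FnLe (f g : ℕ → ℕ) : Prop := ∀ n, f n ≠ 0 → f n = g n

/-- A weakly increasing chain of functions. -/
def WeaklyIncreasing (s : ℕ → ℕ → ℕ) : Prop := ∀ i j, i ≤ j → FnLe (s i) (s j)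

/-- A functional `t : (ℕ → ℕ) → A` is continuous if its value at any `f`
only depends on finitely many values of `f`. -/
def ContinuousFunctional {A : Type*} (t : (ℕ → ℕ) → A) : Prop :=
  ∀ f : ℕ → ℕ, ∃ A₀ : Finset ℕ, ∀ g : ℕ → ℕ, (∀ n ∈ A₀, g n = f n) → t g = t f

/-- Convergence Theorem: continuous functionals stabilize along weakly
increasing chains of approximations. -/
theorem convergence_theorem {A : Type*} (t : (ℕ → ℕ) → A) (s : ℕ → ℕ → ℕ)
    (ht : ContinuousFunctional t) (hs : WeaklyIncreasing s) :
    ∃ n : ℕ, ∀ m : ℕ, n ≤ m → t (s m) = t (s n) := by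
  classical
  -- limit function
  set F : ℕ → ℕ := fun n => if h : ∃ i, s i n ≠ 0 then s (Nat.find h) n else 0 with hF
  obtain ⟨A₀, hA₀⟩ := ht F
  -- stage for each n
  have key : ∀ n, ∃ N, ∀ m, N ≤ m → s m n = F n := by
    intro n
    by_cases h : ∃ i, s i n ≠ 0
    · refine ⟨Nat.find h, fun m hm => ?_⟩
      have := hs (Nat.find h) m hm n (Nat.find_spec h)
      simp [hF, h, ← this]
    · refine ⟨0, fun m _ => ?_⟩
      push_neg at h
      rw [h m]; simp only [hF]; rw [dif_neg (by push_neg; exact h)]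
  choose N hN using key
  refine ⟨A₀.sup N, fun m hm => ?_⟩
  have agree : ∀ k, A₀.sup N ≤ k → t (s k) = t F := by
    intro k hk
    exact hA₀ (s k) (fun n hn => hN n k (le_trans (Finset.le_sup hn) hk))
  rw [agree m hm, agree (A₀.sup N) le_rfl]
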